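/- Let a group $G$ act on a group $K$ preserving the lower central series $\Gamma_+K$, and for $m\geq 0$ set $G^1_m=\ker(G\to\mathrm{Aut}(K/\Gamma_{m+1}K))$. Then for all $m\geq 1$ and $n\geq 1$, $[G^1_m,\Gamma_nK]\subseteq\Gamma_{m+n}K$; consequently $G^1_*$ coincides with the Johnson filtration $\mathcal{F}_*^{K_*}(G)$ induced by the lower central series. -/

import Mathlib

open scoped commutatorElement


/-- The extension of the lower central series to an extended N-series:
`K₀ = ⊤` and `Kₙ = Γₙ K = lowerCentralSeries K (n-1)` for `n ≥ 1`. -/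
def lcsExt (K : Type*) [Group K] : ℕ → Subgroup K
  | 0 => ⊤
  | n + 1 => (⊤ : Subgroup K).lowerCentralSeries n

theorem lcs_succ' {K : Type*} [Group K] (n : ℕ) :
    (⊤ : Subgroup K).lowerCentralSeries (n + 1) = ⁅(⊤ : Subgroup K).lowerCentralSeries n, (⊤ : Subgroup K)⁆ := rfl

/-- Three subgroups lemma modulo a normal subgroup. -/
theorem three_subgroups {G : Type*} [Group G] {H₁ H₂ H₃ N : Subgroup G} [N.Normal]
    (h1 : ⁅⁅H₂, H₃⁆, H₁⁆ ≤ N) (h2 : ⁅⁅H₃, H₁⁆, H₂⁆ ≤ N) : ⁅⁅H₁, H₂⁆, H₃⁆ ≤ N := by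
  let π := QuotientGroup.mk' N
  have key : ∀ A B C : Subgroup G, ⁅⁅A, B⁆, C⁆ ≤ N ↔
      ⁅⁅A.map π, B.map π⁆, C.map π⁆ = ⊥ := by
    intro A B C
    rw [← Subgroup.map_commutator, ← Subgroup.map_commutator, Subgroup.map_eq_bot_iff,
      QuotientGroup.ker_mk']
  rw [key] at h1 h2 ⊢
  exact Subgroup.commutator_commutator_eq_bot_of_rotate h1 h2

/-- `⁅Γ_{i+1}, Γ_{j+1}⁆ ≤ Γ_{i+j+2}` in Lean's 0-based indexing. -/
theorem lcs_comm {K : Type*} [Group K] (j i : ℕ) :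
    ⁅(⊤ : Subgroup K).lowerCentralSeries i, (⊤ : Subgroup K).lowerCentralSeries j⁆ ≤ (⊤ : Subgroup K).lowerCentralSeries (i + j + 1) := by
  induction j generalizing i with
  | zero => exact le_of_eq (lcs_succ' i).symm
  | succ j ih =>
    rw [Subgroup.commutator_comm, lcs_succ']
    apply three_subgroups
    · calc ⁅⁅(⊤ : Subgroup K), (⊤ : Subgroup K).lowerCentralSeries i⁆, (⊤ : Subgroup K).lowerCentralSeries j⁆
          = ⁅(⊤ : Subgroup K).lowerCentralSeries (i + 1), (⊤ : Subgroup K).lowerCentralSeries j⁆ := by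
            rw [Subgroup.commutator_comm (⊤ : Subgroup K), ← lcs_succ']
        _ ≤ (⊤ : Subgroup K).lowerCentralSeries (i + 1 + j + 1) := ih _
        _ = (⊤ : Subgroup K).lowerCentralSeries (i + (j + 1) + 1) := by ring_nf
    · calc ⁅⁅(⊤ : Subgroup K).lowerCentralSeries i, (⊤ : Subgroup K).lowerCentralSeries j⁆, (⊤ : Subgroup K)⁆
          ≤ ⁅(⊤ : Subgroup K).lowerCentralSeries (i + j + 1), (⊤ : Subgroup K)⁆ :=
            Subgroup.commutator_mono (ih i) le_rfl
        _ = (⊤ : Subgroup K).lowerCentralSeries (i + j + 1 + 1) := (lcs_succ' _).symm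
        _ = (⊤ : Subgroup K).lowerCentralSeries (i + (j + 1) + 1) := by ring_nf

/-- The key step: if `g(k)k⁻¹ ∈ Γ_{m+1}K` for all `k ∈ K`, then
`g(k)k⁻¹ ∈ Γ_{m+n+1}K` for all `k ∈ Γ_{n+1}K` (0-based indexing). -/
theorem andreadakis_key {G K : Type*} [Group G] [Group K] (φ : G →* MulAut K)
    (g : G) (m : ℕ) (h : ∀ k : K, φ g k * k⁻¹ ∈ (⊤ : Subgroup K).lowerCentralSeries m) :
    ∀ n, ∀ k ∈ (⊤ : Subgroup K).lowerCentralSeries n, φ g k * k⁻¹ ∈ (⊤ : Subgroup K).lowerCentralSeries (m + n) := by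
  intro n
  induction n with
  | zero => intro k _; exact h k
  | succ n ih =>
    set L := (⊤ : Subgroup K).lowerCentralSeries (m + (n + 1)) with hL
    have hnorm : L.Normal := by rw [hL]; infer_instance
    let D : Subgroup K :=
      { carrier := { k | φ g k * k⁻¹ ∈ L }
        one_mem' := by simp [L.one_mem]
        mul_mem' := by
          intro p q hp hq
          have e : φ g (p * q) * (p * q)⁻¹ = (φ g p * p⁻¹) * (p * (φ g q * q⁻¹) * p⁻¹) := by
            simp only [map_mul]; group
          rw [Set.mem_setOf_eq, e]
          exact L.mul_mem hp (hnorm.conj_mem _ hq p)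
        inv_mem' := by
          intro p hp
          have e : φ g p⁻¹ * (p⁻¹)⁻¹ = p⁻¹ * (φ g p * p⁻¹)⁻¹ * (p⁻¹)⁻¹ := by
            simp only [map_inv]; group
          rw [Set.mem_setOf_eq, e]
          exact hnorm.conj_mem _ (L.inv_mem hp) p⁻¹ }
    have hgen : (⊤ : Subgroup K).lowerCentralSeries (n + 1) ≤ D := by
      rw [lcs_succ', Subgroup.commutator_le]
      intro x hx y _
      show φ g ⁅x, y⁆ * ⁅x, y⁆⁻¹ ∈ L
      set a := φ g x * x⁻¹ with hadef
      set b := φ g y * y⁻¹ with hbdef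
      have hax : φ g x = a * x := by rw [hadef, inv_mul_cancel_right]
      have hby : φ g y = b * y := by rw [hbdef, inv_mul_cancel_right]
      have haL : a ∈ (⊤ : Subgroup K).lowerCentralSeries (m + n) := ih x hx
      have hbL : b ∈ (⊤ : Subgroup K).lowerCentralSeries m := h y
      have hxy : ⁅x, y⁆ ∈ (⊤ : Subgroup K).lowerCentralSeries (n + 1) := by
        rw [lcs_succ']
        exact Subgroup.commutator_mem_commutator hx (Subgroup.mem_top y)
      -- the auxiliary commutators, all lying in `L`
      have hA : ⁅x, b⁆ ∈ L := by
        have h2 := lcs_comm (K := K) m n (Subgroup.commutator_mem_commutator hx hbL)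
        have e : n + m + 1 = m + (n + 1) := by ring
        rwa [e] at h2
      have hB : ⁅b, ⁅x, y⁆⁆ ∈ L := by
        have h2 := lcs_comm (K := K) (n + 1) m (Subgroup.commutator_mem_commutator hbL hxy)
        exact Subgroup.lowerCentralSeries_antitone (⊤ : Subgroup K) (by omega) h2
      have haC : ∀ z : K, ⁅a, z⁆ ∈ L := by
        intro z
        have h2 : ⁅a, z⁆ ∈ ⁅(⊤ : Subgroup K).lowerCentralSeries (m + n), (⊤ : Subgroup K)⁆ :=
          Subgroup.commutator_mem_commutator haL (Subgroup.mem_top z)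
        rwa [← lcs_succ'] at h2
      have key_id : φ g ⁅x, y⁆ * ⁅x, y⁆⁻¹ =
          (a * (⁅x, b⁆ * ⁅b, ⁅x, y⁆⁆) * a⁻¹) * ⁅a, ⁅x, y⁆⁆ *
            (⁅x, y⁆ * ⁅a, b * y⁆ * ⁅x, y⁆⁻¹) := by
        rw [show (φ g ⁅x, y⁆ : K) = ⁅φ g x, φ g y⁆ from map_commutatorElement _ x y, hax, hby]
        simp only [commutatorElement_def]
        group
      rw [key_id]
      exact L.mul_mem
        (L.mul_mem (hnorm.conj_mem _ (L.mul_mem hA hB) a) (haC ⁅x, y⁆))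
        (hnorm.conj_mem _ (haC (b * y)) ⁅x, y⁆)
    intro k hk
    exact hgen hk

/-- Let a group `G` act on a group `K` preserving the lower central series
`Γ₊K`, and for `m ≥ 0` let `G¹ₘ = ker(G → Aut(K/Γ_{m+1}K))`, i.e. the set of `g`
with `g(k)k⁻¹ ∈ Γ_{m+1}K` for all `k ∈ K`.  Then `[G¹ₘ, ΓₙK] ⊆ Γ_{m+n}K` for all
`m, n ≥ 1`; consequently `G¹_*` coincides with the Johnson filtration induced by
the lower central series (extended with `K₀ = K₁ = K`).  Here
`Γ_{n+1}K = lowerCentralSeries K n`. -/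
theorem andreadakis_coincidence {G K : Type*} [Group G] [Group K]
    (φ : G →* MulAut K)
    (hact : ∀ g n, ∀ k ∈ (⊤ : Subgroup K).lowerCentralSeries n, φ g k ∈ (⊤ : Subgroup K).lowerCentralSeries n) :
    -- `[G¹ₘ, ΓₙK] ⊆ Γ_{m+n}K`:  (here `ΓₙK = lowerCentralSeries K (n-1)`)
    (∀ m, 1 ≤ m → ∀ g : G,
      (∀ k : K, φ g k * k⁻¹ ∈ (⊤ : Subgroup K).lowerCentralSeries m) →
      ∀ n, ∀ k ∈ (⊤ : Subgroup K).lowerCentralSeries n,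
        φ g k * k⁻¹ ∈ (⊤ : Subgroup K).lowerCentralSeries (m + n)) ∧
    -- consequently `G¹ₘ = 𝓕ₘ(G)` for every `m`:
    (∀ m, ∀ g : G,
      (∀ k : K, φ g k * k⁻¹ ∈ lcsExt K (m + 1)) ↔
      (∀ n, ∀ k ∈ lcsExt K n, φ g k * k⁻¹ ∈ lcsExt K (m + n))) := by
  constructor
  · intro m _ g h n
    exact andreadakis_key φ g m h n
  · intro m g
    constructor
    · intro h n
      match n with
      | 0 =>
        intro k _
        match m with
        | 0 => exact Subgroup.mem_top _
        | m' + 1 =>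
          show φ g k * k⁻¹ ∈ (⊤ : Subgroup K).lowerCentralSeries m'
          exact Subgroup.lowerCentralSeries_antitone (⊤ : Subgroup K) (Nat.le_succ m') (h k)
      | n' + 1 =>
        intro k hk
        show φ g k * k⁻¹ ∈ (⊤ : Subgroup K).lowerCentralSeries (m + n')
        exact andreadakis_key φ g m h n' k hk
    · intro h k
      exact h 1 k (Subgroup.mem_top k)
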